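/- arXiv:1204.6690 — 4 statements merged into one kernel-verified Lean document; each statement's English description precedes it below -/
import Mathlib

section
/- Let f : B^n → C be hyperbolic-harmonic on the unit ball B^n of C^n with ‖f‖_HB = sup_{z∈B^n} (1−|z|²)(|∇̂f(z)| + |∇̂f̄(z)|) < ∞. Then for every pair of distinct points z, w ∈ B^n, the weighted Lipschitz function satisfies L_f(z, w) = (1−|z|²)^{1/2}(1−|w|²)^{1/2}|f(z) − f(w)|/|z − w| ≤ π √n · ‖f‖_HB. -/
open MeasureTheory Metric Complex

noncomputable section

/-- `ℂⁿ` with the Euclidean norm. -/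
abbrev Cn (n : ℕ) := EuclideanSpace ℂ (Fin n)

/-- The Wirtinger derivative `∂f/∂z_k = (∂f/∂x_k - i ∂f/∂y_k)/2`. -/
noncomputable def wdz (n : ℕ) (f : Cn n → ℂ) (z : Cn n) (k : Fin n) : ℂ :=
  (1 / 2 : ℂ) *
    (fderiv ℝ f z (EuclideanSpace.single k 1) -
      Complex.I * fderiv ℝ f z (EuclideanSpace.single k Complex.I))

/-- The Wirtinger derivative `∂f/∂z̄_k = (∂f/∂x_k + i ∂f/∂y_k)/2`. -/
noncomputable def wdzbar (n : ℕ) (f : Cn n → ℂ) (z : Cn n) (k : Fin n) : ℂ :=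
  (1 / 2 : ℂ) *
    (fderiv ℝ f z (EuclideanSpace.single k 1) +
      Complex.I * fderiv ℝ f z (EuclideanSpace.single k Complex.I))

/-- Euclidean norm of a vector of complex numbers. -/
noncomputable def euclNorm (n : ℕ) (v : Fin n → ℂ) : ℝ :=
  Real.sqrt (∑ k, Complex.normSq (v k))

/-- The Laplace–Beltrami operator
`Δ_h u = (1-|z|²)² Σ_k (u_{x_k x_k} + u_{y_k y_k})
  + 4(n-1)(1-|z|²) Σ_k (x_k u_{x_k} + y_k u_{y_k})`. -/
noncomputable def laplaceH (n : ℕ) (u : Cn n → ℝ) (z : Cn n) : ℝ :=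
  (1 - ‖z‖ ^ 2) ^ 2 *
      ∑ k, (fderiv ℝ (fun w => fderiv ℝ u w (EuclideanSpace.single k 1)) z
              (EuclideanSpace.single k 1) +
            fderiv ℝ (fun w => fderiv ℝ u w (EuclideanSpace.single k Complex.I)) z
              (EuclideanSpace.single k Complex.I)) +
    4 * ((n : ℝ) - 1) * (1 - ‖z‖ ^ 2) *
      ∑ k, ((z k).re * fderiv ℝ u z (EuclideanSpace.single k 1) +
            (z k).im * fderiv ℝ u z (EuclideanSpace.single k Complex.I))

/-- A complex-valued function on the unit ball of `ℂⁿ` is hyperbolic-harmonic if it is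
twice continuously differentiable there and its real and imaginary parts are annihilated
by the Laplace–Beltrami operator. -/
def IsHHarmonic (n : ℕ) (f : Cn n → ℂ) : Prop :=
  ContDiffOn ℝ 2 f (ball 0 1) ∧
    ∀ z ∈ ball (0 : Cn n) 1,
      laplaceH n (fun w => (f w).re) z = 0 ∧ laplaceH n (fun w => (f w).im) z = 0
/-- `(1−|z|²)(|∇̂f(z)| + |∇̂f̄(z)|)`, the quantity whose supremum is the Bloch norm. -/
noncomputable def hbExpr (n : ℕ) (f : Cn n → ℂ) (z : Cn n) : ℝ :=
  (1 - ‖z‖ ^ 2) * (euclNorm n (wdz n f z) + euclNorm n (wdzbar n f z))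

/-- The `h`-harmonic Bloch "norm" `‖f‖_HB = sup_{z ∈ Bⁿ} (1−|z|²)(|∇̂f(z)| + |∇̂f̄(z)|)`. -/
noncomputable def hbNorm (n : ℕ) (f : Cn n → ℂ) : ℝ :=
  ⨆ z : ball (0 : Cn n) 1, hbExpr n f z

/-- The weighted Lipschitz function
`L_f(z,w) = (1−|z|²)^{1/2}(1−|w|²)^{1/2}|f(z) − f(w)|/|z − w|`. -/
noncomputable def weightedLip (n : ℕ) (f : Cn n → ℂ) (z w : Cn n) : ℝ :=
  Real.sqrt (1 - ‖z‖ ^ 2) * Real.sqrt (1 - ‖w‖ ^ 2) * ‖f z - f w‖ / ‖z - w‖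

/-! ### Auxiliary lemmas -/

lemma integral_le_pi_div_two_mul (g : ℝ → ℝ) (hg : ContinuousOn g (Set.Icc 0 1))
    (c : ℝ)
    (hbound : ∀ t ∈ Set.Ioo (0:ℝ) 1, g t * (2 * Real.sqrt (t * (1 - t))) ≤ c) :
    ∫ t in (0:ℝ)..1, g t ≤ Real.pi / 2 * c := by
  have hgint : IntervalIntegrable g volume 0 1 :=
    (hg.mono (by rw [Set.uIcc_of_le]; norm_num)).intervalIntegrable
  set G : ℝ → ℝ := fun t => c/2 * Real.arcsin (2*t - 1) - ∫ s in (0:ℝ)..t, g s with hGdef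
  have hprim : ContinuousOn (fun t => ∫ s in (0:ℝ)..t, g s) (Set.Icc 0 1) := by
    have := intervalIntegral.continuousOn_primitive_interval
      (f := g) (μ := volume) (a := 0) (b := 1)
      (by rw [Set.uIcc_of_le (by norm_num)]
          exact hg.integrableOn_compact isCompact_Icc)
    rwa [Set.uIcc_of_le (by norm_num)] at this
  have hGcont : ContinuousOn G (Set.Icc 0 1) := by
    apply ContinuousOn.sub _ hprim
    exact (continuous_const.mul (Real.continuous_arcsin.comp
      (by continuity))).continuousOn
  have hGderiv : ∀ t ∈ Set.Ioo (0:ℝ) 1,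
      HasDerivAt G (c/2 * (1 / Real.sqrt (1 - (2*t-1)^2) * 2) - g t) t := by
    intro t ht
    have h1 : HasDerivAt (fun t : ℝ => Real.arcsin (2*t - 1))
        (1 / Real.sqrt (1 - (2*t-1)^2) * 2) t := by
      have hx1 : 2*t - 1 ≠ -1 := by nlinarith [ht.1, ht.2]
      have hx2 : 2*t - 1 ≠ 1 := by nlinarith [ht.1, ht.2]
      have := (Real.hasDerivAt_arcsin hx1 hx2).comp t
        (((hasDerivAt_id t).const_mul 2).sub_const 1)
      simpa [Function.comp_def] using this
    have h2 : HasDerivAt (fun u => ∫ s in (0:ℝ)..u, g s) (g t) t := by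
      apply intervalIntegral.integral_hasDerivAt_right
      · exact hgint.mono_set (by
          rw [Set.uIcc_of_le (le_of_lt ht.1), Set.uIcc_of_le (by norm_num)]
          exact Set.Icc_subset_Icc le_rfl ht.2.le)
      · exact ContinuousOn.stronglyMeasurableAtFilter isOpen_Ioo
          (hg.mono Set.Ioo_subset_Icc_self) t ht
      · exact hg.continuousAt (Icc_mem_nhds ht.1 ht.2)
    exact ((h1.const_mul (c/2)).sub h2)
  have hsqrt : ∀ t ∈ Set.Ioo (0:ℝ) 1,
      Real.sqrt (1 - (2*t-1)^2) = 2 * Real.sqrt (t * (1-t)) := by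
    intro t ht
    rw [show 1 - (2*t-1)^2 = 4 * (t * (1-t)) by ring, Real.sqrt_mul (by norm_num),
      show Real.sqrt 4 = 2 by
        rw [show (4:ℝ) = 2^2 by norm_num, Real.sqrt_sq (by norm_num)]]
  have hmono : MonotoneOn G (Set.Icc 0 1) := by
    apply monotoneOn_of_deriv_nonneg (convex_Icc 0 1) hGcont
    · intro t ht
      rw [interior_Icc] at ht
      exact ((hGderiv t ht).differentiableAt).differentiableWithinAt
    · intro t ht
      rw [interior_Icc] at ht
      rw [(hGderiv t ht).deriv]
      have hs : (0:ℝ) < Real.sqrt (t * (1-t)) := by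
        apply Real.sqrt_pos.mpr; nlinarith [ht.1, ht.2]
      rw [hsqrt t ht]
      have hb := hbound t ht
      rw [sub_nonneg]
      rw [show c/2 * (1 / (2 * Real.sqrt (t * (1-t))) * 2) = c / (2 * Real.sqrt (t*(1-t))) by
        field_simp]
      rw [le_div_iff₀ (by positivity)]
      exact hb
  have h01 := hmono (Set.left_mem_Icc.mpr (by norm_num)) (Set.right_mem_Icc.mpr (by norm_num)) (by norm_num)
  simp only [hGdef] at h01
  rw [intervalIntegral.integral_same] at h01
  norm_num at h01
  linarith

lemma sum_single_eq (n : ℕ) (v : Cn n) :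
    ∑ k, EuclideanSpace.single k (v k) = v := by
  ext j
  rw [show ((∑ k, EuclideanSpace.single k (v k)) : Cn n) j
      = ∑ k, (EuclideanSpace.single k (v k) : Cn n) j by
        rw [WithLp.ofLp_sum, Finset.sum_apply]]
  simp [EuclideanSpace.single_apply]

lemma single_decomp (n : ℕ) (k : Fin n) (c : ℂ) :
    EuclideanSpace.single k c = (c.re : ℝ) • EuclideanSpace.single k (1:ℂ)
      + (c.im : ℝ) • EuclideanSpace.single k Complex.I := by
  ext j
  by_cases h : j = k <;>
    simp [EuclideanSpace.single_apply, h, Complex.real_smul, Complex.ext_iff]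

lemma euclNorm_nonneg (n : ℕ) (v : Fin n → ℂ) : 0 ≤ euclNorm n v := Real.sqrt_nonneg _

lemma cs_aux (n : ℕ) (a v : Fin n → ℂ) :
    ∑ k, ‖a k‖ * ‖v k‖ ≤ euclNorm n a * Real.sqrt (∑ k, ‖v k‖ ^ 2) := by
  have h1 : (∑ k, Complex.normSq (a k)) = ∑ k, ‖a k‖ ^ 2 := by
    apply Finset.sum_congr rfl
    intro k _
    rw [Complex.normSq_eq_norm_sq]
  rw [euclNorm, h1, ← Real.sqrt_mul (by positivity)]
  rw [Real.le_sqrt (by positivity) (by positivity)]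
  exact Finset.sum_mul_sq_le_sq_mul_sq Finset.univ _ _

lemma fderiv_apply_le (n : ℕ) (f : Cn n → ℂ) (x : Cn n) (v : Cn n) :
    ‖fderiv ℝ f x v‖ ≤ (euclNorm n (wdz n f x) + euclNorm n (wdzbar n f x)) * ‖v‖ := by
  set D := fderiv ℝ f x with hD
  have hDv : D v = ∑ k, (wdz n f x k * v k + wdzbar n f x k * (starRingEnd ℂ) (v k)) := by
    conv_lhs => rw [← sum_single_eq n v, map_sum]
    apply Finset.sum_congr rfl
    intro k _
    rw [single_decomp n k (v k), map_add, D.map_smul, D.map_smul]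
    rw [wdz, wdzbar]
    set a := D (EuclideanSpace.single k (1:ℂ))
    set b := D (EuclideanSpace.single k Complex.I)
    set u := v k
    rw [Complex.real_smul, Complex.real_smul]
    rw [show (starRingEnd ℂ) u = (u.re : ℂ) - u.im * Complex.I by
      simp [Complex.ext_iff]]
    rw [show u = (u.re : ℂ) + u.im * Complex.I from (Complex.re_add_im u).symm]
    push_cast
    ring_nf
    simp [Complex.I_sq]
    ring
  rw [hDv]
  calc ‖∑ k, (wdz n f x k * v k + wdzbar n f x k * (starRingEnd ℂ) (v k))‖
      ≤ ∑ k, (‖wdz n f x k‖ * ‖v k‖ + ‖wdzbar n f x k‖ * ‖v k‖) := by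
        refine (norm_sum_le _ _).trans (Finset.sum_le_sum fun k _ => ?_)
        refine (norm_add_le _ _).trans ?_
        simp [norm_mul]
    _ = (∑ k, ‖wdz n f x k‖ * ‖v k‖) + ∑ k, ‖wdzbar n f x k‖ * ‖v k‖ := by
        rw [Finset.sum_add_distrib]
    _ ≤ euclNorm n (wdz n f x) * Real.sqrt (∑ k, ‖v k‖ ^ 2)
          + euclNorm n (wdzbar n f x) * Real.sqrt (∑ k, ‖v k‖ ^ 2) :=
        add_le_add (cs_aux n _ _) (cs_aux n _ _)
    _ = (euclNorm n (wdz n f x) + euclNorm n (wdzbar n f x)) * ‖v‖ := by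
        rw [EuclideanSpace.norm_eq]; ring

set_option maxHeartbeats 1000000 in
/-- If `f` is `h`-harmonic on the unit ball of `ℂⁿ` with finite Bloch norm,
then for all distinct `z, w` in the ball, `L_f(z,w) ≤ π √n ‖f‖_HB`. -/
theorem weightedLip_le_pi_sqrt_mul_hbNorm (n : ℕ) (hn : 1 ≤ n) (f : Cn n → ℂ)
    (hf : IsHHarmonic n f)
    (hfin : BddAbove (Set.range fun z : ball (0 : Cn n) 1 => hbExpr n f z))
    (z w : Cn n) (hz : z ∈ ball (0 : Cn n) 1) (hw : w ∈ ball (0 : Cn n) 1) (hzw : z ≠ w) :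
    weightedLip n f z w ≤ Real.pi * Real.sqrt n * hbNorm n f := by
  set M := hbNorm n f with hMdef
  have hle : ∀ x (hx : x ∈ ball (0 : Cn n) 1), hbExpr n f x ≤ M := by
    intro x hx
    exact le_ciSup hfin (⟨x, hx⟩ : ball (0 : Cn n) 1)
  have hz1 : ‖z‖ < 1 := by rwa [mem_ball_zero_iff] at hz
  have hw1 : ‖w‖ < 1 := by rwa [mem_ball_zero_iff] at hw
  set A := 1 - ‖z‖ ^ 2 with hAdef
  set B := 1 - ‖w‖ ^ 2 with hBdef
  have hA : 0 < A := by nlinarith [norm_nonneg z]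
  have hB : 0 < B := by nlinarith [norm_nonneg w]
  have hM0 : 0 ≤ M := by
    refine le_trans ?_ (hle 0 (mem_ball_self (by norm_num)))
    rw [hbExpr]
    have h1 := euclNorm_nonneg n (wdz n f 0)
    have h2 := euclNorm_nonneg n (wdzbar n f 0)
    have h3 : (1:ℝ) - ‖(0 : Cn n)‖ ^ 2 = 1 := by simp
    rw [h3, one_mul]
    linarith
  set γ : ℝ → Cn n := fun t => z + t • (w - z) with hγdef
  have hmem : ∀ t ∈ Set.Icc (0:ℝ) 1, γ t ∈ ball (0 : Cn n) 1 := by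
    intro t ht
    have h := (convex_ball (0 : Cn n) 1) hz hw (by linarith [ht.2] : (0:ℝ) ≤ 1 - t) ht.1
      (by ring)
    have : γ t = (1 - t) • z + t • w := by
      rw [hγdef]; module
    rwa [this]
  have hγd : ∀ t : ℝ, HasDerivAt γ (w - z) t := by
    intro t
    have := ((hasDerivAt_id t).smul_const (w - z)).const_add z
    simpa [hγdef] using this
  have hdiff : ∀ t ∈ Set.Icc (0:ℝ) 1, DifferentiableAt ℝ f (γ t) := by
    intro t ht
    exact (hf.1.contDiffAt (isOpen_ball.mem_nhds (hmem t ht))).differentiableAt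
      (by norm_num)
  have hderiv : ∀ t ∈ Set.Icc (0:ℝ) 1,
      HasDerivAt (fun t => f (γ t)) (fderiv ℝ f (γ t) (w - z)) t := by
    intro t ht
    exact ((hdiff t ht).hasFDerivAt).comp_hasDerivAt t (hγd t)
  have hcontD : ContinuousOn (fun t => fderiv ℝ f (γ t) (w - z)) (Set.Icc 0 1) := by
    have h1 : ContinuousOn (fderiv ℝ f) (ball (0 : Cn n) 1) :=
      hf.1.continuousOn_fderiv_of_isOpen isOpen_ball (by norm_num)
    have h2 : ContinuousOn (fun t => fderiv ℝ f (γ t)) (Set.Icc (0:ℝ) 1) :=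
      h1.comp (Continuous.continuousOn (by continuity)) hmem
    exact (ContinuousLinearMap.apply ℝ ℂ (w - z)).continuous.comp_continuousOn h2
  have hgcont : ContinuousOn (fun t => ‖fderiv ℝ f (γ t) (w - z)‖) (Set.Icc 0 1) :=
    hcontD.norm
  have hintD : IntervalIntegrable (fun t => fderiv ℝ f (γ t) (w - z)) volume 0 1 :=
    (hcontD.mono (by rw [Set.uIcc_of_le (by norm_num)])).intervalIntegrable
  have hFTC : ∫ t in (0:ℝ)..1, fderiv ℝ f (γ t) (w - z) = f w - f z := by
    have hγ0 : γ 0 = z := by rw [hγdef]; simp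
    have hγ1 : γ 1 = w := by rw [hγdef]; simp
    rw [intervalIntegral.integral_eq_sub_of_hasDerivAt
      (fun t ht => hderiv t (by rwa [Set.uIcc_of_le (by norm_num)] at ht)) hintD,
      hγ0, hγ1]
  have key : ‖f w - f z‖ ≤ Real.pi / 2 * (M * ‖w - z‖ / (Real.sqrt A * Real.sqrt B)) := by
    rw [← hFTC]
    refine le_trans (intervalIntegral.norm_integral_le_integral_norm (by norm_num)) ?_
    apply integral_le_pi_div_two_mul _ hgcont
    intro t ht
    have htI : t ∈ Set.Icc (0:ℝ) 1 := Set.Ioo_subset_Icc_self ht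
    have hγb : 1 - ‖γ t‖ ^ 2 ≥ (1 - t) * A + t * B := by
      have h1 : ‖γ t‖ ≤ (1 - t) * ‖z‖ + t * ‖w‖ := by
        have : γ t = (1 - t) • z + t • w := by rw [hγdef]; module
        rw [this]
        refine (norm_add_le _ _).trans ?_
        rw [norm_smul, norm_smul]
        rw [Real.norm_eq_abs, Real.norm_eq_abs, _root_.abs_of_nonneg ht.1.le,
          _root_.abs_of_nonneg (by linarith [ht.2] : (0:ℝ) ≤ 1 - t)]
      have h0 : 0 ≤ ‖γ t‖ := norm_nonneg _
      have hsq : ‖γ t‖ ^ 2 ≤ ((1 - t) * ‖z‖ + t * ‖w‖) ^ 2 := by nlinarith [h1, h0]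
      rw [hAdef, hBdef]
      nlinarith [hsq, ht.1, ht.2, norm_nonneg z, norm_nonneg w,
        mul_nonneg (mul_nonneg ht.1.le (by linarith [ht.2] : (0:ℝ) ≤ 1 - t))
          (sq_nonneg (‖z‖ - ‖w‖))]
    have hγpos : 0 < 1 - ‖γ t‖ ^ 2 := by
      have := hmem t htI
      rw [mem_ball_zero_iff] at this
      nlinarith [norm_nonneg (γ t)]
    have h1 : ‖fderiv ℝ f (γ t) (w - z)‖ * (1 - ‖γ t‖ ^ 2) ≤ M * ‖w - z‖ := by
      have hB1 := fderiv_apply_le n f (γ t) (w - z)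
      have hB2 := hle (γ t) (hmem t htI)
      rw [hbExpr] at hB2
      calc ‖fderiv ℝ f (γ t) (w - z)‖ * (1 - ‖γ t‖ ^ 2)
          ≤ (euclNorm n (wdz n f (γ t)) + euclNorm n (wdzbar n f (γ t))) * ‖w - z‖
              * (1 - ‖γ t‖ ^ 2) := by
            apply mul_le_mul_of_nonneg_right hB1 hγpos.le
        _ = (1 - ‖γ t‖ ^ 2) * (euclNorm n (wdz n f (γ t)) + euclNorm n (wdzbar n f (γ t)))
              * ‖w - z‖ := by ring
        _ ≤ M * ‖w - z‖ := by
            apply mul_le_mul_of_nonneg_right hB2 (norm_nonneg _)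
    have h2 : 2 * Real.sqrt (t * (1 - t)) * (Real.sqrt A * Real.sqrt B)
        ≤ 1 - ‖γ t‖ ^ 2 := by
      refine le_trans ?_ hγb
      have e1 : Real.sqrt (t * (1-t)) * (Real.sqrt A * Real.sqrt B)
          = Real.sqrt ((1-t) * A) * Real.sqrt (t * B) := by
        rw [Real.sqrt_mul ht.1.le, Real.sqrt_mul (by linarith [ht.2] : (0:ℝ) ≤ 1 - t),
          Real.sqrt_mul ht.1.le]
        ring
      rw [mul_assoc, e1]
      nlinarith [Real.sq_sqrt (mul_nonneg (by linarith [ht.2] : (0:ℝ) ≤ 1-t) hA.le),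
        Real.sq_sqrt (mul_nonneg ht.1.le hB.le),
        sq_nonneg (Real.sqrt ((1-t)*A) - Real.sqrt (t*B)),
        Real.sqrt_nonneg ((1-t)*A), Real.sqrt_nonneg (t*B)]
    rw [le_div_iff₀ (by positivity)]
    calc ‖fderiv ℝ f (γ t) (w - z)‖ * (2 * Real.sqrt (t * (1 - t)))
          * (Real.sqrt A * Real.sqrt B)
        = ‖fderiv ℝ f (γ t) (w - z)‖
            * (2 * Real.sqrt (t * (1 - t)) * (Real.sqrt A * Real.sqrt B)) := by ring
      _ ≤ ‖fderiv ℝ f (γ t) (w - z)‖ * (1 - ‖γ t‖ ^ 2) :=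
          mul_le_mul_of_nonneg_left h2 (norm_nonneg _)
      _ ≤ M * ‖w - z‖ := h1
  -- final algebra
  have hd : (0:ℝ) < ‖z - w‖ := by
    rw [norm_pos_iff]
    exact sub_ne_zero_of_ne hzw
  have hwz : ‖w - z‖ = ‖z - w‖ := norm_sub_rev _ _
  rw [weightedLip, div_le_iff₀ hd]
  have habs : ‖f z - f w‖ = ‖f w - f z‖ := by
    rw [norm_sub_rev]
  rw [habs, ← hAdef, ← hBdef]
  have hsn : 1 ≤ Real.sqrt n := by
    rw [show (1:ℝ) = Real.sqrt 1 by rw [Real.sqrt_one]]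
    exact Real.sqrt_le_sqrt (by exact_mod_cast hn)
  have hsA : 0 < Real.sqrt A := Real.sqrt_pos.mpr hA
  have hsB : 0 < Real.sqrt B := Real.sqrt_pos.mpr hB
  calc Real.sqrt A * Real.sqrt B * ‖f w - f z‖
      ≤ Real.sqrt A * Real.sqrt B
          * (Real.pi / 2 * (M * ‖w - z‖ / (Real.sqrt A * Real.sqrt B))) := by
        apply mul_le_mul_of_nonneg_left key (by positivity)
    _ = Real.pi / 2 * (M * ‖z - w‖) := by
        rw [hwz]; field_simp
    _ ≤ Real.pi * Real.sqrt n * M * ‖z - w‖ := by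
        nlinarith [Real.pi_pos, mul_nonneg hM0 hd.le, Real.pi_pos.le,
          mul_nonneg (mul_nonneg Real.pi_pos.le (mul_nonneg hM0 hd.le)) (sub_nonneg.mpr hsn)]
end
end

section
/- Let f : B^n → C be hyperbolic-harmonic on the unit ball B^n of C^n and suppose sup_{z,w∈B^n, z≠w} L_f(z, w) < ∞, where L_f(z, w) = (1−|z|²)^{1/2}(1−|w|²)^{1/2}|f(z) − f(w)|/|z − w|. Then f belongs to the h-harmonic Bloch space, i.e. ‖f‖_HB = sup_{z∈B^n} (1−|z|²)(|∇̂f(z)| + |∇̂f̄(z)|) < ∞. -/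
open MeasureTheory Metric Complex

noncomputable section

-- aux: euclNorm bound
lemma euclNorm_le (n : ℕ) (v : Fin n → ℂ) (M : ℝ) (hM : 0 ≤ M)
    (h : ∀ k, ‖v k‖ ≤ M) : euclNorm n v ≤ Real.sqrt n * M := by
  have h1 : ∀ k, Complex.normSq (v k) ≤ M ^ 2 := by
    intro k
    have := h k
    have h0 := norm_nonneg (v k)
    rw [← Complex.sq_norm]
    nlinarith
  calc euclNorm n v ≤ Real.sqrt (∑ _k : Fin n, M ^ 2) :=
        Real.sqrt_le_sqrt (Finset.sum_le_sum fun k _ => h1 k)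
    _ = Real.sqrt (n * M ^ 2) := by simp [Finset.sum_const, mul_comm]
    _ = Real.sqrt n * M := by
        rw [Real.sqrt_mul (Nat.cast_nonneg n), Real.sqrt_sq hM]

-- norm bound for wdz/wdzbar pattern
lemma half_bound (a b : ℂ) (K : ℝ) (ha : ‖a‖ ≤ K) (hb : ‖b‖ ≤ K) :
    ‖(1/2 : ℂ) * (a - Complex.I * b)‖ ≤ K := by
  have : ‖(1/2 : ℂ) * (a - Complex.I * b)‖
      ≤ (1/2) * (‖a‖ + ‖b‖) := by
    rw [norm_mul]
    calc ‖(1/2 : ℂ)‖ * ‖a - Complex.I * b‖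
        ≤ (1/2) * (‖a‖ + ‖Complex.I * b‖) := by
          rw [show ‖(1/2 : ℂ)‖ = 1/2 by norm_num]
          gcongr
          exact norm_sub_le _ _
      _ = (1/2) * (‖a‖ + ‖b‖) := by rw [norm_mul]; simp
  calc ‖(1/2 : ℂ) * (a - Complex.I * b)‖ ≤ (1/2) * (‖a‖ + ‖b‖) := this
    _ ≤ (1/2) * (K + K) := by gcongr
    _ = K := by ring

lemma half_bound' (a b : ℂ) (K : ℝ) (ha : ‖a‖ ≤ K) (hb : ‖b‖ ≤ K) :
    ‖(1/2 : ℂ) * (a + Complex.I * b)‖ ≤ K := by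
  have := half_bound a (-b) K ha (by simpa using hb)
  simpa [mul_neg, sub_neg_eq_add] using this

/-- If `f` is `h`-harmonic on the unit ball of `ℂⁿ` and the weighted Lipschitz
function `L_f` is bounded over pairs of distinct points, then `f` is in the `h`-harmonic
Bloch space, i.e. `sup_{z∈Bⁿ} (1−|z|²)(|∇̂f(z)| + |∇̂f̄(z)|) < ∞`. -/
theorem hbNorm_finite_of_weightedLip_bounded (n : ℕ) (hn : 1 ≤ n) (f : Cn n → ℂ)
    (hf : IsHHarmonic n f)
    (hlip : ∃ C : ℝ, ∀ z ∈ ball (0 : Cn n) 1, ∀ w ∈ ball (0 : Cn n) 1,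
      z ≠ w → weightedLip n f z w ≤ C) :
    ∃ C : ℝ, ∀ z ∈ ball (0 : Cn n) 1, hbExpr n f z ≤ C := by
  obtain ⟨C, hC⟩ := hlip
  -- C is nonnegative
  have hC0 : 0 ≤ C := by
    set k0 : Fin n := ⟨0, hn⟩
    set w₀ : Cn n := EuclideanSpace.single k0 (1/2 : ℂ)
    have hw₀n : ‖w₀‖ = 1/2 := by
      simp [w₀, EuclideanSpace.norm_single]
    have hw₀ : w₀ ∈ ball (0 : Cn n) 1 := by
      rw [mem_ball_zero_iff, hw₀n]; norm_num
    have hne : (0 : Cn n) ≠ w₀ := by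
      intro h
      have : ‖w₀‖ = 0 := by rw [← h]; simp
      rw [hw₀n] at this; norm_num at this
    have := hC 0 (by simp) w₀ hw₀ hne
    refine le_trans ?_ this
    unfold weightedLip
    positivity
  refine ⟨2 * Real.sqrt n * (Real.sqrt 2 * C), fun z hz => ?_⟩
  have hz1 : ‖z‖ < 1 := mem_ball_zero_iff.mp hz
  set r : ℝ := 1 - ‖z‖ ^ 2 with hr_def
  have hr : 0 < r := by
    have := norm_nonneg z
    nlinarith
  set K : ℝ := Real.sqrt 2 * C / r with hK_def
  have hK0 : 0 ≤ K := by positivity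
  have hD : ‖fderiv ℝ f z‖ ≤ K := by
    apply norm_fderiv_le_of_lip' ℝ hK0
    have hopen : {w : Cn n | ‖w‖ ^ 2 < (1 + ‖z‖ ^ 2) / 2} ∈ nhds z := by
      apply IsOpen.mem_nhds
      · exact isOpen_lt (by fun_prop) continuous_const
      · simp only [Set.mem_setOf_eq]; nlinarith
    filter_upwards [hopen] with w hw
    rcases eq_or_ne w z with h | h
    · simp [h]
    · have hw2 : ‖w‖ ^ 2 < (1 + ‖z‖ ^ 2) / 2 := hw
      have hw1 : ‖w‖ < 1 := by
        have := norm_nonneg w; nlinarith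
      have hwball : w ∈ ball (0 : Cn n) 1 := mem_ball_zero_iff.mpr hw1
      have hrw : r / 2 ≤ 1 - ‖w‖ ^ 2 := by
        rw [hr_def]; nlinarith
      have hd : 0 < ‖z - w‖ := by
        rw [norm_pos_iff, sub_ne_zero]; exact h.symm
      have hwl := hC z hz w hwball (fun he => h (he ▸ rfl))
      unfold weightedLip at hwl
      rw [div_le_iff₀ hd] at hwl
      set A : ℝ := ‖f z - f w‖ with hA_def
      have hA0 : 0 ≤ A := norm_nonneg _
      have h2 : Real.sqrt r * Real.sqrt (r / 2) ≤
          Real.sqrt r * Real.sqrt (1 - ‖w‖ ^ 2) := by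
        gcongr
      have h3 : Real.sqrt r * Real.sqrt (r / 2) = r / Real.sqrt 2 := by
        rw [← Real.sqrt_mul hr.le, show r * (r / 2) = r ^ 2 / 2 by ring,
          Real.sqrt_div (by positivity), Real.sqrt_sq hr.le]
      have h4 : r / Real.sqrt 2 * A ≤ C * ‖z - w‖ := by
        calc r / Real.sqrt 2 * A ≤ Real.sqrt r * Real.sqrt (1 - ‖w‖ ^ 2) * A := by
              rw [← h3]; exact mul_le_mul_of_nonneg_right h2 hA0
          _ ≤ C * ‖z - w‖ := hwl
      have hs2 : (0 : ℝ) < Real.sqrt 2 := by positivity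
      have hfin : A ≤ K * ‖z - w‖ := by
        have := mul_le_mul_of_nonneg_right h4 (le_of_lt (by positivity : (0:ℝ) < Real.sqrt 2 / r))
        have heq : r / Real.sqrt 2 * A * (Real.sqrt 2 / r) = A := by
          field_simp
        rw [heq] at this
        calc A ≤ C * ‖z - w‖ * (Real.sqrt 2 / r) := this
          _ = K * ‖z - w‖ := by rw [hK_def]; ring
      calc ‖f w - f z‖ = A := by rw [hA_def, norm_sub_rev]
        _ ≤ K * ‖z - w‖ := hfin
        _ = K * ‖w - z‖ := by rw [norm_sub_rev]
  -- component bounds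
  have hcomp : ∀ (k : Fin n) (c : ℂ), ‖c‖ = 1 →
      ‖fderiv ℝ f z (EuclideanSpace.single k c)‖ ≤ K := by
    intro k c hc
    calc ‖fderiv ℝ f z (EuclideanSpace.single k c)‖
        ≤ ‖fderiv ℝ f z‖ * ‖EuclideanSpace.single k c‖ :=
          ContinuousLinearMap.le_opNorm _ _
      _ = ‖fderiv ℝ f z‖ := by rw [EuclideanSpace.norm_single, hc, mul_one]
      _ ≤ K := hD
  have h1 : euclNorm n (wdz n f z) ≤ Real.sqrt n * K := by
    apply euclNorm_le n _ K hK0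
    intro k
    exact half_bound _ _ K (hcomp k 1 norm_one) (hcomp k Complex.I (by simp))
  have h2 : euclNorm n (wdzbar n f z) ≤ Real.sqrt n * K := by
    apply euclNorm_le n _ K hK0
    intro k
    exact half_bound' _ _ K (hcomp k 1 norm_one) (hcomp k Complex.I (by simp))
  have hrK : r * K = Real.sqrt 2 * C := by
    rw [hK_def]; field_simp
  calc hbExpr n f z = r * (euclNorm n (wdz n f z) + euclNorm n (wdzbar n f z)) := rfl
    _ ≤ r * (Real.sqrt n * K + Real.sqrt n * K) := by
        apply mul_le_mul_of_nonneg_left (add_le_add h1 h2) hr.le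
    _ = 2 * Real.sqrt n * (r * K) := by ring
    _ = 2 * Real.sqrt n * (Real.sqrt 2 * C) := by rw [hrK]
end
end

section
/- Let r ∈ (0,1) and let a be a nonzero point of the unit ball B^n of C^n. Then the Euclidean ball B^n(a, r(1−|a|²)/2) is contained in the pseudo-hyperbolic ball E(a, r) = {z ∈ B^n : |φ_a(z)| < r}. -/
open MeasureTheory Metric Complex

noncomputable section

/-- The Hermitian inner product of the paper: `⟨z,w⟩ = Σ_k z_k w̄_k`
(conjugate-linear in the second variable). -/
noncomputable def herm (n : ℕ) (z w : Cn n) : ℂ := @inner ℂ _ _ w z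

/-- The orthogonal projection `P_a z = a ⟨z,a⟩/⟨a,a⟩` onto the span of `a`. -/
noncomputable def projLine (n : ℕ) (a z : Cn n) : Cn n :=
  (herm n z a / herm n a a) • a

/-- The Möbius transformation
`φ_a(z) = (a − P_a z − (1−|a|²)^{1/2}(z − P_a z))/(1 − ⟨z,a⟩)` of the unit ball of `ℂⁿ`.
(For `a = 0` this formula evaluates to `φ_0(z) = −z`.) -/
noncomputable def mobius (n : ℕ) (a z : Cn n) : Cn n :=
  (1 - herm n z a)⁻¹ •
    (a - projLine n a z - ((Real.sqrt (1 - ‖a‖ ^ 2) : ℂ)) • (z - projLine n a z))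
private lemma arith_key (x r A : ℝ) (hx : 0 ≤ x) (hxr : x < r * A / 2)
    (hr0 : 0 < r) (hr1 : r < 1) : x < r * (A - x) := by nlinarith

private lemma arith_pos (x r A : ℝ) (hx : 0 ≤ x) (hxr : x < r * A / 2)
    (hr0 : 0 < r) (hr1 : r < 1) (hA0 : 0 < A) : 0 < A - x := by nlinarith

/-- For `r ∈ (0,1)` and a nonzero `a` in the unit ball of `ℂⁿ`, the Euclidean
ball `Bⁿ(a, r(1−|a|²)/2)` is contained in the pseudo-hyperbolic ball
`E(a,r) = {z ∈ Bⁿ : |φ_a(z)| < r}`. -/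
theorem ball_subset_pseudoHyperbolic (n : ℕ) (r : ℝ) (hr : r ∈ Set.Ioo (0 : ℝ) 1)
    (a : Cn n) (ha : a ∈ ball (0 : Cn n) 1) (ha0 : a ≠ 0) :
    ball a (r * (1 - ‖a‖ ^ 2) / 2) ⊆
      {z ∈ ball (0 : Cn n) 1 | ‖mobius n a z‖ < r} := by
  obtain ⟨hr0, hr1⟩ := hr
  intro z hz
  rw [mem_ball, dist_eq_norm] at hz
  have haN : ‖a‖ < 1 := by simpa [mem_ball, dist_eq_norm] using ha
  set A : ℝ := 1 - ‖a‖ ^ 2 with hA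
  have hA0 : 0 < A := by nlinarith [norm_nonneg a]
  have hA1 : A ≤ 1 := by nlinarith [norm_nonneg a]
  set w : Cn n := z - a with hwdef
  have hw : ‖w‖ < r * A / 2 := hz
  have hw0 : (0:ℝ) ≤ ‖w‖ := norm_nonneg w
  have hzaw : z = a + w := by rw [hwdef]; abel
  -- z in unit ball
  have hz1 : z ∈ ball (0 : Cn n) 1 := by
    rw [mem_ball, dist_eq_norm, sub_zero]
    have h1 : ‖z‖ ≤ ‖a‖ + ‖w‖ := by rw [hzaw]; exact norm_add_le a w
    nlinarith [norm_nonneg a]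
  refine ⟨hz1, ?_⟩
  -- setup inner product facts
  have hiaa : (@inner ℂ _ _ a a : ℂ) = ((‖a‖ : ℂ)) ^ 2 := inner_self_eq_norm_sq_to_K a
  have hia0 : (@inner ℂ _ _ a a : ℂ) ≠ 0 := inner_self_ne_zero.mpr ha0
  set c : ℂ := @inner ℂ _ _ a w / @inner ℂ _ _ a a with hc
  set s : ℝ := Real.sqrt A with hs
  have hs0 : 0 ≤ s := Real.sqrt_nonneg A
  have hs2 : s ^ 2 = A := Real.sq_sqrt hA0.le
  have hiz : (@inner ℂ _ _ a z : ℂ) = @inner ℂ _ _ a a + @inner ℂ _ _ a w := by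
    rw [hzaw, inner_add_right]
  -- projection formula
  have hproj : projLine n a z = a + c • a := by
    unfold projLine herm
    rw [hiz, add_div, div_self hia0, hc, add_smul, one_smul]
  have hnum : a - projLine n a z - ((s : ℂ)) • (z - projLine n a z)
      = -(c • a) - (s : ℂ) • (w - c • a) := by
    rw [hproj, hzaw]
    congr 1
    · abel
    · congr 1; abel
  -- orthogonality
  have horth : (@inner ℂ _ _ (c • a) (w - c • a) : ℂ) = 0 := by
    rw [inner_smul_left, inner_sub_right, inner_smul_right, hc,
      div_mul_cancel₀ _ hia0, sub_self, mul_zero]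
  have horth' : (@inner ℂ _ _ (-(c • a)) (-((s:ℂ) • (w - c • a))) : ℂ) = 0 := by
    rw [inner_neg_neg, inner_smul_right, horth, mul_zero]
  -- Pythagoras for M
  set M : Cn n := -(c • a) - (s : ℂ) • (w - c • a) with hMdef
  have hMsq : ‖M‖ ^ 2 = ‖c • a‖ ^ 2 + s ^ 2 * ‖w - c • a‖ ^ 2 := by
    have : M = -(c • a) + -((s:ℂ) • (w - c • a)) := by rw [hMdef]; abel
    rw [this, norm_add_sq (𝕜 := ℂ), horth']
    simp only [Complex.zero_re, mul_zero, add_zero, norm_neg, norm_smul,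
      Complex.norm_real, Real.norm_eq_abs, _root_.abs_of_nonneg hs0, mul_pow, map_zero, mul_zero, add_zero]
  have hwsq : ‖w‖ ^ 2 = ‖c • a‖ ^ 2 + ‖w - c • a‖ ^ 2 := by
    have hwe : w = c • a + (w - c • a) := by abel
    calc ‖w‖ ^ 2 = ‖c • a + (w - c • a)‖ ^ 2 := by rw [← hwe]
    _ = ‖c • a‖ ^ 2 + 2 * Complex.re (@inner ℂ _ _ (c • a) (w - c • a)) + ‖w - c • a‖ ^ 2 :=
        norm_add_sq (𝕜 := ℂ) _ _
    _ = ‖c • a‖ ^ 2 + ‖w - c • a‖ ^ 2 := by rw [horth]; simp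
  have hMle : ‖M‖ ≤ ‖w‖ := by
    have h1 : ‖M‖ ^ 2 ≤ ‖w‖ ^ 2 := by
      rw [hMsq, hwsq]
      have := sq_nonneg ‖w - c • a‖
      nlinarith
    nlinarith [norm_nonneg M, norm_nonneg w]
  -- denominator
  have hden : (1 - herm n z a : ℂ) = (A : ℂ) - @inner ℂ _ _ a w := by
    unfold herm
    rw [hiz, hiaa, hA]
    push_cast
    ring
  have hiw : ‖(@inner ℂ _ _ a w : ℂ)‖ ≤ ‖w‖ := by
    calc ‖(@inner ℂ _ _ a w : ℂ)‖ ≤ ‖a‖ * ‖w‖ := norm_inner_le_norm (𝕜 := ℂ) a w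
    _ ≤ 1 * ‖w‖ := mul_le_mul_of_nonneg_right haN.le hw0
    _ = ‖w‖ := one_mul _
  have hdenge : A - ‖w‖ ≤ ‖(1 - herm n z a : ℂ)‖ := by
    rw [hden]
    calc A - ‖w‖ ≤ ‖(A : ℂ)‖ - ‖(@inner ℂ _ _ a w : ℂ)‖ := by
          rw [Complex.norm_real, Real.norm_eq_abs, abs_of_pos hA0]; linarith
    _ ≤ ‖(A : ℂ) - @inner ℂ _ _ a w‖ := norm_sub_norm_le _ _
  clear_value A w s c M
  have hkey : ‖w‖ < r * (A - ‖w‖) := arith_key _ _ _ hw0 hw hr0 hr1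
  have hAw : 0 < A - ‖w‖ := arith_pos _ _ _ hw0 hw hr0 hr1 hA0
  have hdenpos : 0 < ‖(1 - herm n z a : ℂ)‖ := lt_of_lt_of_le hAw hdenge
  -- finish
  have hmob : ‖mobius n a z‖ = ‖(1 - herm n z a : ℂ)‖⁻¹ * ‖M‖ := by
    unfold mobius
    rw [norm_smul, ← hA, ← hs, hnum, norm_inv]
  rw [hmob, inv_mul_lt_iff₀ hdenpos] -- maybe name differs
  calc ‖M‖ ≤ ‖w‖ := hMle
  _ < r * (A - ‖w‖) := hkey
  _ ≤ ‖(1 - herm n z a : ℂ)‖ * r := by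
        rw [mul_comm ‖(1 - herm n z a : ℂ)‖ r]; exact mul_le_mul_of_nonneg_left hdenge hr0.le
end
end

section
/- Let r ∈ (0,1), let z be a point of the unit ball B^n of C^n, and let w ∈ B^n(z, r(1−|z|²)/2) with w ≠ z. Then (1−|z|²)^{1/2}(1−|w|²)^{1/2} / |z − w| ≥ √(1−r²) / r. -/
open MeasureTheory Metric Complex

noncomputable section

set_option maxHeartbeats 1000000 in
/-- For `r ∈ (0,1)`, `z` in the unit ball of `ℂⁿ`, and
`w ∈ Bⁿ(z, r(1−|z|²)/2)` with `w ≠ z`,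
`(1−|z|²)^{1/2}(1−|w|²)^{1/2}/|z − w| ≥ √(1−r²)/r`. -/
theorem sqrt_weights_div_dist_ge (n : ℕ) (r : ℝ) (hr : r ∈ Set.Ioo (0 : ℝ) 1)
    (z w : Cn n) (hz : z ∈ ball (0 : Cn n) 1)
    (hw : w ∈ ball z (r * (1 - ‖z‖ ^ 2) / 2)) (hwz : w ≠ z) :
    Real.sqrt (1 - ‖z‖ ^ 2) * Real.sqrt (1 - ‖w‖ ^ 2) / ‖z - w‖ ≥
      Real.sqrt (1 - r ^ 2) / r := by
  obtain ⟨hr0, hr1⟩ := hr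
  have ht1 : ‖z‖ < 1 := mem_ball_zero_iff.mp hz
  have ht0 : (0:ℝ) ≤ ‖z‖ := norm_nonneg z
  have hd : ‖z - w‖ < r * (1 - ‖z‖ ^ 2) / 2 := by
    rw [mem_ball, dist_eq_norm] at hw
    simpa [norm_sub_rev] using hw
  have hd0 : 0 < ‖z - w‖ := by
    rw [norm_pos_iff, sub_ne_zero]
    exact fun h => hwz h.symm
  set t := ‖z‖ with ht
  set d := ‖z - w‖ with hdd
  have hs : 0 < 1 - t ^ 2 := by nlinarith
  have hwle : ‖w‖ ≤ t + d := by
    calc ‖w‖ = ‖z - (z - w)‖ := by rw [sub_sub_cancel]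
    _ ≤ ‖z‖ + ‖z - w‖ := norm_sub_le _ _
  have hw1 : ‖w‖ < 1 := by
    nlinarith [mul_pos (sub_pos.mpr ht1) (sub_pos.mpr hr1), sq_nonneg (1 - t)]
  have hw0 : (0:ℝ) ≤ ‖w‖ := norm_nonneg w
  have h3 : 0 ≤ r * (1 - t ^ 2) - 2 * d := by linarith
  have hrt : r * t ≤ 1 := by nlinarith
  have h4 : 0 ≤ 3 - 4 * r * t + r ^ 2 * t ^ 2 := by
    nlinarith [mul_nonneg (sub_nonneg.mpr hrt) (by linarith : (0:ℝ) ≤ 3 - r * t)]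
  have T1 : 0 ≤ (r * (1 - t ^ 2) - 2 * d) * (r ^ 2 * (1 - t ^ 2) ^ 2) :=
    mul_nonneg h3 (by positivity)
  have T2 : 0 ≤ (3 - 4 * r * t + r ^ 2 * t ^ 2) * (r ^ 2 * (1 - t ^ 2) ^ 2 * d) :=
    mul_nonneg h4 (by positivity)
  have T3 : 0 ≤ (r ^ 2 * (1 - t ^ 2) + 1 - r ^ 2) *
      (d * (r * (1 - t ^ 2) - 2 * d) * (r * (1 - t ^ 2))) := by
    have : (0:ℝ) ≤ r ^ 2 * (1 - t ^ 2) + 1 - r ^ 2 := by nlinarith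
    exact mul_nonneg this (mul_nonneg (mul_nonneg hd0.le h3) (by positivity))
  have hrs : 0 < r * (1 - t ^ 2) := by positivity
  have key : (1 - r ^ 2) * d ^ 2 ≤ (1 - t ^ 2) * (1 - ‖w‖ ^ 2) * r ^ 2 := by
    have h1 : 1 - (t + d) ^ 2 ≤ 1 - ‖w‖ ^ 2 := by nlinarith
    have h2 : (1 - r ^ 2) * d ^ 2 ≤ (1 - t ^ 2) * (1 - (t + d) ^ 2) * r ^ 2 := by
      nlinarith [T1, T2, T3, hrs]
    have h5 : (1 - t ^ 2) * (1 - (t + d) ^ 2) * r ^ 2 ≤ (1 - t ^ 2) * (1 - ‖w‖ ^ 2) * r ^ 2 :=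
      mul_le_mul_of_nonneg_right (mul_le_mul_of_nonneg_left h1 hs.le) (sq_nonneg r)
    exact h2.trans h5
  rw [ge_iff_le, div_le_div_iff₀ hr0 hd0]
  have e1 : Real.sqrt (1 - r ^ 2) * d = Real.sqrt ((1 - r ^ 2) * d ^ 2) := by
    rw [Real.sqrt_mul (by nlinarith [mul_pos (sub_pos.mpr hr1) (by linarith : (0:ℝ) < 1 + r)] :
      (0:ℝ) ≤ 1 - r ^ 2), Real.sqrt_sq hd0.le]
  have e2 : Real.sqrt (1 - t ^ 2) * Real.sqrt (1 - ‖w‖ ^ 2) * r =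
      Real.sqrt ((1 - t ^ 2) * (1 - ‖w‖ ^ 2) * r ^ 2) := by
    have hw2 : (0:ℝ) ≤ 1 - ‖w‖ ^ 2 := by nlinarith
    rw [Real.sqrt_mul (mul_nonneg hs.le hw2), Real.sqrt_sq hr0.le, Real.sqrt_mul hs.le]
  rw [e1, e2]
  exact Real.sqrt_le_sqrt key
end
end
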